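/- Let G be a profinite-C group and A a minimal closed normal subgroup of G (i.e., A ≠ 1 and the only closed subgroups of A normal in G are 1 and A). Then A is cyclic of prime order. -/

import Mathlib

open Subgroup

open scoped commutatorElement in
/-- A finite nontrivial group whose Sylow subgroup at the smallest prime `p` has order `p`
(equivalently `p^2 ∤ |A|`) has a proper subgroup containing the commutator subgroup, by
Burnside's normal `p`-complement theorem. -/
lemma aux_comm_ne_top {A : Type*} [Group A] [Finite A] [Nontrivial A]
    (hsq : ¬ ((Nat.card A).minFac) ^ 2 ∣ Nat.card A) : commutator A ≠ ⊤ := by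
  have hn0 : Nat.card A ≠ 0 := Nat.card_pos.ne'
  have hn1 : Nat.card A ≠ 1 := by
    have := Finite.one_lt_card (α := A)
    omega
  set p := (Nat.card A).minFac with hpdef
  have hp : p.Prime := Nat.minFac_prime hn1
  haveI : Fact p.Prime := ⟨hp⟩
  obtain ⟨P⟩ : Nonempty (Sylow p A) := inferInstance
  -- the Sylow subgroup has order exactly p
  have hfact : (Nat.card A).factorization p = 1 := by
    have h1 : 1 ≤ (Nat.card A).factorization p :=
      (Nat.Prime.pow_dvd_iff_le_factorization hp hn0).mp (by simpa using (Nat.minFac_dvd _))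
    have h2 : ¬ 2 ≤ (Nat.card A).factorization p := fun h =>
      hsq ((Nat.Prime.pow_dvd_iff_le_factorization hp hn0).mpr h)
    omega
  have hcardP : Nat.card (P : Subgroup A) = p := by
    rw [Sylow.card_eq_multiplicity, hfact, pow_one]
  -- normalizer ≤ centralizer
  have hP : Subgroup.normalizer ((P : Subgroup A) : Set A) ≤ Subgroup.centralizer (P : Set A) := by
    intro g hg
    set N := Subgroup.normalizer ((P : Subgroup A) : Set A)
    set P' := (P : Subgroup A).subgroupOf N with hP'def
    haveI : P'.Normal := Subgroup.normal_in_normalizer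
    have hcardP' : Nat.card P' = p := by
      rw [← hcardP]
      exact Nat.card_congr (Subgroup.subgroupOfEquivOfLe Subgroup.le_normalizer).toEquiv
    haveI : IsCyclic P' := isCyclic_of_prime_card hcardP'
    haveI : Finite P' := Nat.finite_of_card_ne_zero (by rw [hcardP']; exact hp.pos.ne')
    have hAut : Nat.card (MulAut P') = p - 1 := by
      rw [IsCyclic.card_mulAut, hcardP', Nat.totient_prime hp]
    set g' : N := ⟨g, hg⟩
    have h1 : orderOf (MulAut.conjNormal g' : MulAut P') ∣ p - 1 := by
      rw [← hAut]; exact orderOf_dvd_natCard _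
    have h2 : orderOf (MulAut.conjNormal g' : MulAut P') ∣ Nat.card A := by
      refine (orderOf_map_dvd _ g').trans ?_
      exact (orderOf_dvd_natCard g').trans (Subgroup.card_subgroup_dvd_card N)
    have hcop : Nat.Coprime (Nat.card A) (p - 1) := by
      by_contra h
      set d := Nat.gcd (Nat.card A) (p - 1) with hd
      have hd1 : d ≠ 1 := h
      have hq : d.minFac.Prime := Nat.minFac_prime hd1
      have hq1 : d.minFac ∣ Nat.card A := (Nat.minFac_dvd d).trans (Nat.gcd_dvd_left _ _)
      have hq2 : d.minFac ∣ p - 1 := (Nat.minFac_dvd d).trans (Nat.gcd_dvd_right _ _)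
      have hge : p ≤ d.minFac := Nat.minFac_le_of_dvd hq.two_le hq1
      have hle : d.minFac ≤ p - 1 := Nat.le_of_dvd (by have := hp.two_le; omega) hq2
      have h2le := hp.two_le
      have : p ≤ p - 1 := le_trans hge hle
      omega
    have : orderOf (MulAut.conjNormal g' : MulAut P') = 1 := Nat.eq_one_of_dvd_coprimes hcop h2 h1
    have htriv : (MulAut.conjNormal g' : MulAut P') = 1 := orderOf_eq_one_iff.mp this
    rw [Subgroup.mem_centralizer_iff]
    intro m hm
    have hmN : m ∈ N := Subgroup.le_normalizer hm
    set x : P' := ⟨⟨m, hmN⟩, Subgroup.mem_subgroupOf.mpr hm⟩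
    have hx : MulAut.conjNormal g' x = x := by rw [htriv]; rfl
    have hx1 : ((MulAut.conjNormal g' x : N) : A) = g * m * g⁻¹ := by
      rw [MulAut.conjNormal_apply]; rfl
    have hx2 : g * m * g⁻¹ = m := by rw [← hx1, hx]
    calc m * g = (g * m * g⁻¹) * g := by rw [hx2]
    _ = g * m := by group
  -- Burnside's normal p-complement theorem
  haveI : (P : Subgroup A).FiniteIndex := inferInstance
  set W := (MonoidHom.transferSylow P hP).ker with hW
  have hcomp : Subgroup.IsComplement' W (P : Subgroup A) :=
    MonoidHom.ker_transferSylow_isComplement' P hP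
  have hWind : W.index = p := by rw [hcomp.symm.index_eq_card, hcardP]
  have hWne : W ≠ ⊤ := by
    intro h
    rw [h, Subgroup.index_top] at hWind
    exact hp.one_lt.ne' hWind.symm
  -- the quotient A ⧸ W is cyclic of prime order, hence abelian
  have hcardQ : Nat.card (A ⧸ W) = p := by rw [← Subgroup.index_eq_card, hWind]
  haveI : IsCyclic (A ⧸ W) := isCyclic_of_prime_card hcardQ
  letI : CommGroup (A ⧸ W) := IsCyclic.commGroup
  have hle : commutator A ≤ W := by
    rw [_root_.commutator_def, Subgroup.commutator_le]
    intro g₁ _ g₂ _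
    rw [← QuotientGroup.eq_one_iff]
    have : ((⁅g₁, g₂⁆ : A) : A ⧸ W) = ⁅(g₁ : A ⧸ W), (g₂ : A ⧸ W)⁆ :=
      map_commutatorElement (QuotientGroup.mk' W) g₁ g₂
    rw [this, commutatorElement_def, mul_comm (g₁ : A ⧸ W)]
    group
  intro h
  exact hWne (top_le_iff.mp (h ▸ hle))

open Pointwise

/-- A minimal closed normal subgroup of a profinite-C group is cyclic of prime order. -/
theorem stmt11 {G : Type*} [Group G] [TopologicalSpace G] [IsTopologicalGroup G]
    [CompactSpace G] [T2Space G] [TotallyDisconnectedSpace G]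
    (hC : ∀ H : Subgroup G, IsClosed (H : Set G) → ∃ K : Subgroup G,
      IsClosed (K : Set G) ∧ (H : Set G) * (K : Set G) = Set.univ ∧ H ⊓ K = ⊥)
    (A : Subgroup G) [A.Normal] (hAc : IsClosed (A : Set G)) (hA : A ≠ ⊥)
    (hmin : ∀ B : Subgroup G, B ≤ A → IsClosed (B : Set G) → B.Normal → B = ⊥ ∨ B = A) :
    IsCyclic A ∧ ∃ p : ℕ, p.Prime ∧ Nat.card A = p := by
  classical
  haveI hAnormal : A.Normal := ‹A.Normal›
  -- A contains a nontrivial element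
  obtain ⟨a, haA, ha1⟩ : ∃ a ∈ A, a ≠ 1 := by
    by_contra h
    push_neg at h
    exact hA (le_antisymm (fun x hx => Subgroup.mem_bot.mpr (h x hx)) bot_le)
  -- Step 1: A is finite
  obtain ⟨U, hUclopen, h1U, haU⟩ := exists_isClopen_of_totally_separated (Ne.symm ha1)
  obtain ⟨N, hNU⟩ := IsTopologicalGroup.exist_openNormalSubgroup_sub_clopen_nhds_of_one hUclopen h1U
  have haN : a ∉ N.toSubgroup := fun h => haU (hNU h)
  haveI hANnormal : (A ⊓ N.toSubgroup).Normal :=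
    ⟨fun x hx g => Subgroup.mem_inf.mpr ⟨hAnormal.conj_mem x (Subgroup.mem_inf.mp hx).1 g,
      N.isNormal'.conj_mem x (Subgroup.mem_inf.mp hx).2 g⟩⟩
  have hANclosed : IsClosed ((A ⊓ N.toSubgroup : Subgroup G) : Set G) := by
    have := N.toOpenSubgroup.isClosed
    exact hAc.inter this
  have hANbot : A ⊓ N.toSubgroup = ⊥ := by
    rcases hmin _ inf_le_left hANclosed hANnormal with h | h
    · exact h
    · rw [← h] at haA
      exact absurd haA.2 haN
  haveI : Finite (G ⧸ N.toSubgroup) :=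
    inferInstanceAs (Finite (G ⧸ N.toOpenSubgroup.toSubgroup))
  haveI hAfinite : Finite ↥A := by
    set f := (QuotientGroup.mk' N.toSubgroup).comp A.subtype with hf
    have hinj : Function.Injective f := by
      rw [← MonoidHom.ker_eq_bot_iff, eq_bot_iff]
      intro x hx
      have h1 : (x : G) ∈ N.toSubgroup := (QuotientGroup.eq_one_iff _).mp hx
      have h2 : (x : G) ∈ A ⊓ N.toSubgroup := ⟨x.2, h1⟩
      rw [hANbot, Subgroup.mem_bot] at h2
      exact Subgroup.mem_bot.mpr (Subtype.ext h2)
    exact Finite.of_injective f hinj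
  -- all subgroups of A are closed
  have hAsetfin : (A : Set G).Finite := Set.toFinite _
  have hclosedle : ∀ B : Subgroup G, B ≤ A → IsClosed (B : Set G) :=
    fun B hle => (hAsetfin.subset hle).isClosed
  -- setup: an element of prime order p = minFac
  have hcard1 : Nat.card ↥A ≠ 1 := fun h => hA (Subgroup.card_eq_one.mp h)
  set p := (Nat.card ↥A).minFac with hpdef
  have hp : p.Prime := Nat.minFac_prime hcard1
  haveI : Fact p.Prime := ⟨hp⟩
  obtain ⟨x, hx⟩ := exists_prime_orderOf_dvd_card' (G := ↥A) p (Nat.minFac_dvd _)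
  set x₀ : G := (x : G) with hx₀def
  have hx₀ : orderOf x₀ = p := by
    rw [← hx]
    exact orderOf_injective A.subtype A.subtype_injective x
  set H := Subgroup.zpowers x₀ with hHdef
  have hHA : H ≤ A := Subgroup.zpowers_le.mpr x.2
  obtain ⟨K, hKc, hHK, hHKbot⟩ := hC H (hclosedle H hHA)
  set M := A ⊓ K with hMdef
  -- decomposition G = K * A
  have hdec : ∀ g : G, ∃ k ∈ K, ∃ a' ∈ A, g = k * a' := by
    intro g
    have hmem : g⁻¹ ∈ (H : Set G) * (K : Set G) := by rw [hHK]; exact Set.mem_univ _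
    obtain ⟨h, hh, k, hk, hhk⟩ := hmem
    have hhk' : h * k = g⁻¹ := hhk
    exact ⟨k⁻¹, K.inv_mem hk, h⁻¹, A.inv_mem (hHA hh),
      by rw [← mul_inv_rev, hhk', inv_inv]⟩
  have hxM : x₀ ∉ M := by
    intro hm
    have h1 : x₀ ∈ H ⊓ K := ⟨Subgroup.mem_zpowers x₀, hm.2⟩
    rw [hHKbot, Subgroup.mem_bot] at h1
    rw [h1, orderOf_one] at hx₀
    exact hp.one_lt.ne' hx₀.symm
  have hKconj : ∀ k ∈ K, ∀ m ∈ M, k * m * k⁻¹ ∈ M := fun k hk m hm =>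
    ⟨hAnormal.conj_mem m hm.1 k, K.mul_mem (K.mul_mem hk hm.2) (K.inv_mem hk)⟩
  -- complement inside A
  set M' := M.subgroupOf A with hM'def
  set H' := H.subgroupOf A with hH'def
  have hcompl : Subgroup.IsComplement' H' M' := by
    apply Subgroup.isComplement'_of_disjoint_and_mul_eq_univ
    · rw [Subgroup.disjoint_def]
      intro z hzH hzM
      have h1 : (z : G) ∈ H ⊓ K :=
        ⟨Subgroup.mem_subgroupOf.mp hzH, (Subgroup.mem_subgroupOf.mp hzM).2⟩
      rw [hHKbot, Subgroup.mem_bot] at h1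
      exact Subtype.ext h1
    · ext z
      simp only [Set.mem_univ, iff_true]
      have hmem : (z : G) ∈ (H : Set G) * (K : Set G) := by rw [hHK]; exact Set.mem_univ _
      obtain ⟨h, hh, k, hk, hhk⟩ := hmem
      have hhk' : h * k = (z : G) := hhk
      have hkA : k ∈ A := by
        have : k = h⁻¹ * (z : G) := by rw [← hhk']; group
        rw [this]
        exact A.mul_mem (A.inv_mem (hHA hh)) z.2
      refine ⟨⟨h, hHA hh⟩, Subgroup.mem_subgroupOf.mpr hh,
        ⟨k, hkA⟩, Subgroup.mem_subgroupOf.mpr ⟨hkA, hk⟩, ?_⟩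
      exact Subtype.ext hhk'
  have hcardH' : Nat.card H' = p := by
    rw [Nat.card_congr (Subgroup.subgroupOfEquivOfLe hHA).toEquiv, hHdef,
      Nat.card_zpowers, hx₀]
  have hM'ind : M'.index = p := by rw [hcompl.index_eq_card, hcardH']
  -- the normal core of M' in A is trivial
  have hcore : M'.normalCore = ⊥ := by
    set C := M'.normalCore with hCdef
    set B := C.map A.subtype with hBdef
    have hBA : B ≤ A := Subgroup.map_subtype_le C
    have hBM : ∀ b ∈ B, b ∈ M := by
      rintro b ⟨c, hc, rfl⟩
      exact Subgroup.mem_subgroupOf.mp (M'.normalCore_le hc)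
    have hmemC : ∀ z : ↥A, z ∈ C ↔ ∀ b : ↥A, b * z * b⁻¹ ∈ M' := fun z => Iff.rfl
    -- key: conjugating an element of B by an element of K stays in B
    have hkey : ∀ c₁ ∈ C, ∀ k ∈ K, k * (c₁ : G) * k⁻¹ ∈ B := by
      intro c₁ hc₁ k hk
      have hyA : k * (c₁ : G) * k⁻¹ ∈ A := hAnormal.conj_mem _ (c₁ : ↥A).2 k
      refine ⟨⟨k * (c₁ : G) * k⁻¹, hyA⟩, ?_, rfl⟩
      refine (hmemC _).mpr fun b => ?_
      rw [Subgroup.mem_subgroupOf]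
      obtain ⟨k₁, hk₁, a₂, ha₂, he⟩ := hdec ((b : G) * k)
      have hc₂ : (⟨a₂, ha₂⟩ : ↥A) * c₁ * (⟨a₂, ha₂⟩ : ↥A)⁻¹ ∈ C :=
        (Subgroup.normalCore_normal M').conj_mem c₁ hc₁ ⟨a₂, ha₂⟩
      have hc₂M : a₂ * (c₁ : G) * a₂⁻¹ ∈ M := by
        have := Subgroup.mem_subgroupOf.mp (M'.normalCore_le hc₂)
        simpa using this
      have hcalc : ((b * ⟨k * (c₁ : G) * k⁻¹, hyA⟩ * b⁻¹ : ↥A) : G)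
          = k₁ * (a₂ * (c₁ : G) * a₂⁻¹) * k₁⁻¹ := by
        push_cast
        have : (b : G) * k = k₁ * a₂ := he
        calc (b : G) * (k * (c₁ : G) * k⁻¹) * (b : G)⁻¹
            = ((b : G) * k) * (c₁ : G) * ((b : G) * k)⁻¹ := by group
          _ = (k₁ * a₂) * (c₁ : G) * (k₁ * a₂)⁻¹ := by rw [← this]
          _ = k₁ * (a₂ * (c₁ : G) * a₂⁻¹) * k₁⁻¹ := by group
      rw [hcalc]
      exact hKconj k₁ hk₁ _ hc₂M
    haveI hBnormal : B.Normal := by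
      constructor
      intro b hb g
      obtain ⟨k, hk, a', ha', rfl⟩ := hdec g
      obtain ⟨c, hc, rfl⟩ := hb
      have hc₁ : (⟨a', ha'⟩ : ↥A) * c * (⟨a', ha'⟩ : ↥A)⁻¹ ∈ C :=
        (Subgroup.normalCore_normal M').conj_mem c hc ⟨a', ha'⟩
      have hcalc : k * a' * (c : G) * (k * a')⁻¹
          = k * (((⟨a', ha'⟩ : ↥A) * c * (⟨a', ha'⟩ : ↥A)⁻¹ : ↥A) : G) * k⁻¹ := by
        push_cast
        group
      show k * a' * (c : G) * (k * a')⁻¹ ∈ B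
      rw [hcalc]
      exact hkey _ hc₁ k hk
    have hBbot : B = ⊥ := by
      rcases hmin B hBA (hclosedle B hBA) hBnormal with h | h
      · exact h
      · exact absurd (hBM x₀ (h ▸ x.2)) hxM
    rw [eq_bot_iff]
    intro z hz
    have h1 : (z : G) ∈ B := ⟨z, hz, rfl⟩
    rw [hBbot, Subgroup.mem_bot] at h1
    exact Subgroup.mem_bot.mpr (Subtype.ext h1)
  -- A embeds into the permutations of a set of size p, hence p² ∤ |A|
  have hdvd : Nat.card ↥A ∣ p.factorial := by
    have hker : (MulAction.toPermHom ↥A (↥A ⧸ M')).ker = ⊥ := by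
      rw [← Subgroup.normalCore_eq_ker]; exact hcore
    have hinjperm : Function.Injective (MulAction.toPermHom ↥A (↥A ⧸ M')) :=
      (MonoidHom.ker_eq_bot_iff _).mp hker
    have h1 : Nat.card ↥A ∣ Nat.card (Equiv.Perm (↥A ⧸ M')) :=
      Subgroup.card_dvd_of_injective _ hinjperm
    haveI : Fintype (↥A ⧸ M') := Fintype.ofFinite _
    have h2 : Nat.card (Equiv.Perm (↥A ⧸ M')) = (Nat.card (↥A ⧸ M')).factorial := by
      rw [Nat.card_eq_fintype_card, Nat.card_eq_fintype_card, Fintype.card_perm]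
    have h3 : Nat.card (↥A ⧸ M') = p := by rw [← Subgroup.index_eq_card, hM'ind]
    rwa [h2, h3] at h1
  have hsq : ¬ p ^ 2 ∣ Nat.card ↥A := by
    intro hcon
    have h4 : p ^ 2 ∣ p.factorial := hcon.trans hdvd
    have h5 : p.factorial = p * (p - 1).factorial := by
      obtain ⟨m, hm⟩ : ∃ m, p = m + 1 := ⟨p - 1, by have := hp.pos; omega⟩
      rw [hm, Nat.factorial_succ]
      simp
    rw [h5, pow_two] at h4
    have h6 : p ∣ (p - 1).factorial := (Nat.mul_dvd_mul_iff_left hp.pos).mp h4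
    have h7 : p ≤ p - 1 := (Nat.Prime.dvd_factorial hp).mp h6
    have := hp.two_le
    omega
  -- A is abelian
  haveI : Nontrivial ↥A := (Subgroup.nontrivial_iff_ne_bot A).mpr hA
  have hcommne : _root_.commutator ↥A ≠ ⊤ := aux_comm_ne_top hsq
  have hDA : ⁅A, A⁆ ≤ A := Subgroup.commutator_le_left A A
  have hDbot : ⁅A, A⁆ = ⊥ := by
    rcases hmin ⁅A, A⁆ hDA (hclosedle _ hDA) (Subgroup.commutator_normal A A) with h | h
    · exact h
    · exfalso
      apply hcommne
      have hmap : Subgroup.map A.subtype (_root_.commutator ↥A) = ⁅A, A⁆ := by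
        rw [_root_.commutator_def, Subgroup.map_commutator]
        congr 1 <;> rw [← MonoidHom.range_eq_map, A.range_subtype]
      apply Subgroup.map_injective A.subtype_injective
      rw [hmap, h, ← MonoidHom.range_eq_map, A.range_subtype]
  have habel : ∀ a₁ ∈ A, ∀ a₂ ∈ A, a₁ * a₂ = a₂ * a₁ := by
    have hle := Subgroup.commutator_eq_bot_iff_le_centralizer.mp hDbot
    intro a₁ h₁ a₂ h₂
    exact Subgroup.mem_centralizer_iff.mp (hle h₂) a₁ h₁
  -- M is normal in G, hence trivial, hence |A| = p
  haveI hMnormal : M.Normal := by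
    constructor
    intro m hm g
    obtain ⟨k, hk, a', ha', rfl⟩ := hdec g
    have h1 : a' * m * a'⁻¹ = m := by rw [habel a' ha' m hm.1]; group
    have h2 : k * a' * m * (k * a')⁻¹ = k * (a' * m * a'⁻¹) * k⁻¹ := by group
    rw [h2, h1]
    exact hKconj k hk m hm
  have hMbot : M = ⊥ := by
    rcases hmin M inf_le_left (hclosedle M inf_le_left) hMnormal with h | h
    · exact h
    · exact absurd (h ▸ x.2 : x₀ ∈ M) hxM
  have hfin : Nat.card ↥A = p := by
    have hM'b : M' = ⊥ := by rw [hM'def, hMbot, Subgroup.bot_subgroupOf]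
    rw [hM'b, Subgroup.index_bot] at hM'ind
    exact hM'ind
  exact ⟨isCyclic_of_prime_card hfin, p, hp, hfin⟩
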